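/- Consider the planar ODE system (in the variable ρ, decreasing from ρ₀ > 0) dδ/dρ = −(1/ρ)·tan γ, dγ/dρ = −(1/ρ)·tan γ + ω/(v cos γ), with v > 0. Under the feedback ω = (v/ρ)·{sin γ + cos²γ·[cos γ·(1+c₁c₂)·δ + (c₁+c₂)·sin γ]} and with ζ := tan γ + c₁ δ, the function V = δ² + ζ² satisfies dV/dρ = (2/ρ)·(c₁ δ² + c₂ ζ²) along solutions, wherever cos γ ≠ 0 and ρ > 0. -/

import Mathlib

open Set Real

theorem stmt8 (v ρ₀ c₁ c₂ : ℝ) (hv : 0 < v) (hρ₀ : 0 < ρ₀)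
    (δ γ : ℝ → ℝ)
    (ω : ℝ → ℝ)
    (hω : ∀ ρ ∈ Ioc 0 ρ₀, ω ρ = v / ρ *
      (Real.sin (γ ρ) + Real.cos (γ ρ) ^ 2 *
        (Real.cos (γ ρ) * (1 + c₁ * c₂) * δ ρ + (c₁ + c₂) * Real.sin (γ ρ))))
    (hcos : ∀ ρ ∈ Ioc 0 ρ₀, Real.cos (γ ρ) ≠ 0)
    (hδ : ∀ ρ ∈ Ioc 0 ρ₀, HasDerivAt δ (-(1 / ρ) * Real.tan (γ ρ)) ρ)
    (hγ : ∀ ρ ∈ Ioc 0 ρ₀,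
      HasDerivAt γ (-(1 / ρ) * Real.tan (γ ρ) + ω ρ / (v * Real.cos (γ ρ))) ρ) :
    ∀ ρ ∈ Ioc 0 ρ₀,
      HasDerivAt (fun r => δ r ^ 2 + (Real.tan (γ r) + c₁ * δ r) ^ 2)
        ((2 / ρ) * (c₁ * δ ρ ^ 2 + c₂ * (Real.tan (γ ρ) + c₁ * δ ρ) ^ 2)) ρ := by
  intro ρ hρ
  have hρ0 : ρ ≠ 0 := ne_of_gt hρ.1
  have hc := hcos ρ hρ
  have hd := hδ ρ hρ
  -- derivative of tan (γ r)
  have ht : HasDerivAt (fun r => Real.tan (γ r))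
      ((1 / ρ) * ((1 + c₁ * c₂) * δ ρ + (c₁ + c₂) * Real.tan (γ ρ))) ρ := by
    have h := (Real.hasDerivAt_tan hc).comp ρ (hγ ρ hρ)
    refine h.congr_deriv ?_
    rw [hω ρ hρ, Real.tan_eq_sin_div_cos]
    field_simp
    ring
  have hζ : HasDerivAt (fun r => Real.tan (γ r) + c₁ * δ r)
      ((1 / ρ) * ((1 + c₁ * c₂) * δ ρ + (c₁ + c₂) * Real.tan (γ ρ)) +
        c₁ * (-(1 / ρ) * Real.tan (γ ρ))) ρ := ht.add (hd.const_mul c₁)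
  have h := (hd.pow 2).add (hζ.pow 2)
  refine h.congr_deriv ?_
  field_simp
  ring
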